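/- For every ρ ∈ [0,1) and every A > 0, the series M(A) := Σ_{n∈ℤ} 2^{n+ρ+1}·ζ_{n,ρ}^{−1}·α_n(A,ρ) converges. The function A ↦ M(A) is strictly decreasing on (0,∞), M(A) → 0 as A → ∞, and M(A) → ∞ as A → 0⁺. Consequently, for every M > 0 there exists a unique A_M > 0 with M(A_M) = M. -/

import Mathlib

open Filter Topology Asymptotics MeasureTheory

noncomputable section

/-- `ζ_{n,ρ} = ln 2 · k(2^{n+ρ}) / (2^{n+ρ} · γ(2^{n+ρ+1}))`. -/
def zeta (k γ : ℝ → ℝ) (ρ : ℝ) (n : ℤ) : ℝ :=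
  Real.log 2 * k ((2:ℝ) ^ ((n:ℝ) + ρ)) / ((2:ℝ) ^ ((n:ℝ) + ρ) * γ ((2:ℝ) ^ ((n:ℝ) + ρ + 1)))

/-- `θ_{n,ρ} = 2 ζ_{n+1,ρ} / ζ_{n,ρ}`. -/
def thetaF (k γ : ℝ → ℝ) (ρ : ℝ) (n : ℤ) : ℝ :=
  2 * zeta k γ ρ (n + 1) / zeta k γ ρ n

/-- `α_n(A,ρ) = exp(−A·2^n)·exp(−2^n·Σ_{j=n+1}^∞ 2^{−j} ln θ_{j−1,ρ})`
(the tail series is re-indexed by `j = n + 1 + m`, `m ∈ ℕ`). -/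
def alphaF (k γ : ℝ → ℝ) (ρ A : ℝ) (n : ℤ) : ℝ :=
  Real.exp (-(A * (2:ℝ) ^ n)) *
    Real.exp (-((2:ℝ) ^ n *
      ∑' m : ℕ, (2:ℝ) ^ (-(n + 1 + (m:ℤ))) * Real.log (thetaF k γ ρ (n + (m:ℤ)))))

/-- `a_n(A,ρ) = 2 ζ_{n,ρ}⁻¹ α_n(A,ρ)`. -/
def aF (k γ : ℝ → ℝ) (ρ A : ℝ) (n : ℤ) : ℝ := 2 * (zeta k γ ρ n)⁻¹ * alphaF k γ ρ A n



lemma exists_pos_bounds (f : ℝ → ℝ) (hc : ContinuousOn f (Set.Ioi 0))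
    (hpos : ∀ x : ℝ, 0 < x → 0 < f x) {l₀ l₁ : ℝ} (h0 : Tendsto f (𝓝[>] 0) (𝓝 l₀))
    (h1 : Tendsto f atTop (𝓝 l₁)) (hl₀ : 0 < l₀) (hl₁ : 0 < l₁) :
    ∃ c C : ℝ, 0 < c ∧ ∀ x : ℝ, 0 < x → c ≤ f x ∧ f x ≤ C := by
  have e0 : {x : ℝ | f x ∈ Set.Icc (l₀/2) (l₀+1)} ∈ 𝓝[>] (0:ℝ) :=
    h0.eventually (Icc_mem_nhds (by linarith) (by linarith))
  obtain ⟨δ, hδ0, hδ⟩ := mem_nhdsGT_iff_exists_Ioo_subset.mp e0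
  simp only [Set.mem_Ioi] at hδ0
  have e1 : ∀ᶠ x in atTop, f x ∈ Set.Icc (l₁/2) (l₁+1) :=
    h1.eventually (Icc_mem_nhds (by linarith) (by linarith))
  obtain ⟨R, hR⟩ := eventually_atTop.mp e1
  set R' : ℝ := max R (δ/2) with hR'
  have hKne : (δ/2 : ℝ) ≤ R' := le_max_right _ _
  have hKsub : Set.Icc (δ/2) R' ⊆ Set.Ioi (0:ℝ) := fun x hx => lt_of_lt_of_le (by linarith) hx.1
  obtain ⟨xm, hxm, hxmle⟩ := (isCompact_Icc (a := δ/2) (b := R')).exists_isMinOn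
    (Set.nonempty_Icc.mpr hKne) (hc.mono hKsub)
  obtain ⟨xM, hxM, hxMle⟩ := (isCompact_Icc (a := δ/2) (b := R')).exists_isMaxOn
    (Set.nonempty_Icc.mpr hKne) (hc.mono hKsub)
  refine ⟨min (min (l₀/2) (l₁/2)) (f xm), max (max (l₀+1) (l₁+1)) (f xM),
    lt_min (lt_min (by linarith) (by linarith)) (hpos xm (hKsub hxm)), fun x hx => ?_⟩
  rcases lt_or_ge x δ with hxd | hxd
  · have := hδ ⟨hx, hxd⟩
    exact ⟨le_trans (min_le_left _ _) (le_trans (min_le_left _ _) this.1),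
      le_trans this.2 (le_trans (le_max_left _ _) (le_max_left _ _))⟩
  rcases le_or_gt x R' with hxR | hxR
  · have hxK : x ∈ Set.Icc (δ/2) R' := ⟨by linarith, hxR⟩
    exact ⟨le_trans (min_le_right _ _) (hxmle hxK), le_trans (hxMle hxK) (le_max_right _ _)⟩
  · have := hR x (le_of_lt (lt_of_le_of_lt (le_max_left _ _) hxR))
    exact ⟨le_trans (min_le_left _ _) (le_trans (min_le_right _ _) this.1),
      le_trans this.2 (le_trans (le_max_right _ _) (le_max_left _ _))⟩
lemma tendsto_rpow_nhdsGT_zero {p : ℝ} (hp : 0 < p) :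
    Tendsto (fun x : ℝ => x ^ p) (𝓝[>] (0:ℝ)) (𝓝 0) := by
  have : ContinuousAt (fun x : ℝ => x ^ p) 0 :=
    Real.continuousAt_rpow_const 0 p (Or.inr hp.le)
  have h : Tendsto (fun x : ℝ => x ^ p) (𝓝[>] (0:ℝ)) (𝓝 ((0:ℝ) ^ p)) :=
    this.tendsto.mono_left nhdsWithin_le_nhds
  rwa [Real.zero_rpow hp.ne'] at h

lemma comp_bounds (f : ℝ → ℝ) {p f₀ : ℝ} (hp : 0 < p) (hf₀ : 0 < f₀)
    (hc : ContinuousOn f (Set.Ioi 0)) (hpos : ∀ x : ℝ, 0 < x → 0 < f x)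
    (hinf : Tendsto (fun x : ℝ => f x / x ^ p) atTop (𝓝 1))
    (h0 : Tendsto f (𝓝[>] (0:ℝ)) (𝓝 f₀)) :
    ∃ c C : ℝ, 0 < c ∧ ∀ x : ℝ, 0 < x →
      c * (1 + x ^ p) ≤ f x ∧ f x ≤ C * (1 + x ^ p) := by
  have hcont_pow : ContinuousOn (fun x : ℝ => 1 + x ^ p) (Set.Ioi 0) := fun x hx =>
    ((continuousAt_const.add
      (Real.continuousAt_rpow_const x p (Or.inl (ne_of_gt hx)))).continuousWithinAt)
  have hpow_pos : ∀ x : ℝ, 0 < x → 0 < 1 + x ^ p := fun x hx => by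
    have := Real.rpow_pos_of_pos hx p; linarith
  have hg0 : Tendsto (fun x : ℝ => f x / (1 + x ^ p)) (𝓝[>] (0:ℝ)) (𝓝 f₀) := by
    have hd : Tendsto (fun x : ℝ => 1 + x ^ p) (𝓝[>] (0:ℝ)) (𝓝 1) := by
      have := (tendsto_rpow_nhdsGT_zero hp).const_add 1
      simpa using this
    have := h0.div hd one_ne_zero
    rw [div_one] at this
    exact this
  have hratio : Tendsto (fun x : ℝ => x ^ p / (1 + x ^ p)) atTop (𝓝 (1:ℝ)) := by
    have h1 : Tendsto (fun x : ℝ => (1 + (x ^ p)⁻¹)⁻¹) atTop (𝓝 (1:ℝ)) := by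
      have h2 := ((tendsto_rpow_atTop hp).inv_tendsto_atTop).const_add 1
      have h3 := h2.inv₀ (by norm_num : (1:ℝ) + 0 ≠ 0)
      simpa using h3
    refine h1.congr' ?_
    filter_upwards [eventually_gt_atTop (0:ℝ)] with x hx
    have hxp := Real.rpow_pos_of_pos hx p
    field_simp
    ring
  have hg1 : Tendsto (fun x : ℝ => f x / (1 + x ^ p)) atTop (𝓝 (1:ℝ)) := by
    have := hinf.mul hratio
    rw [mul_one] at this
    refine this.congr' ?_
    filter_upwards [eventually_gt_atTop (0:ℝ)] with x hx
    have hxp := Real.rpow_pos_of_pos hx p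
    field_simp
  obtain ⟨c, C, hc0, hcC⟩ := exists_pos_bounds (fun x => f x / (1 + x ^ p))
    (hc.div hcont_pow (fun x hx => (hpow_pos x hx).ne'))
    (fun x hx => div_pos (hpos x hx) (hpow_pos x hx)) hg0 hg1 hf₀ one_pos
  refine ⟨c, C, hc0, fun x hx => ?_⟩
  obtain ⟨h1, h2⟩ := hcC x hx
  constructor
  · calc c * (1 + x ^ p) ≤ (f x / (1 + x ^ p)) * (1 + x ^ p) := by
          exact mul_le_mul_of_nonneg_right h1 (hpow_pos x hx).le
    _ = f x := div_mul_cancel₀ _ (hpow_pos x hx).ne'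
  · calc f x = (f x / (1 + x ^ p)) * (1 + x ^ p) := (div_mul_cancel₀ _ (hpow_pos x hx).ne').symm
    _ ≤ C * (1 + x ^ p) := mul_le_mul_of_nonneg_right h2 (hpow_pos x hx).le
/-- the dyadic point `ξ_n = 2^(n+ρ)`. -/
def xi (ρ : ℝ) (n : ℤ) : ℝ := (2:ℝ) ^ ((n:ℝ) + ρ)

lemma xi_pos (ρ : ℝ) (n : ℤ) : 0 < xi ρ n := Real.rpow_pos_of_pos two_pos _

lemma rpow_succ_eq (ρ : ℝ) (n : ℤ) : (2:ℝ) ^ ((n:ℝ) + ρ + 1) = 2 * xi ρ n := by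
  rw [xi, Real.rpow_add two_pos, Real.rpow_one, mul_comm]

lemma xi_succ (ρ : ℝ) (n : ℤ) : xi ρ (n + 1) = 2 * xi ρ n := by
  rw [← rpow_succ_eq ρ n, xi]
  push_cast
  ring_nf

lemma zeta_eq (k γ : ℝ → ℝ) (ρ : ℝ) (n : ℤ) :
    zeta k γ ρ n = Real.log 2 * k (xi ρ n) / (xi ρ n * γ (2 * xi ρ n)) := by
  rw [zeta, ← rpow_succ_eq ρ n]; rfl

lemma zeta_pos (k γ : ℝ → ℝ) (ρ : ℝ) (hk_pos : ∀ x : ℝ, 0 < x → 0 < k x)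
    (hγ_pos : ∀ x : ℝ, 0 < x → 0 < γ x) (n : ℤ) : 0 < zeta k γ ρ n := by
  have hx := xi_pos ρ n
  rw [zeta_eq]
  have hl2 : 0 < Real.log 2 := Real.log_pos one_lt_two
  exact div_pos (mul_pos hl2 (hk_pos _ hx)) (mul_pos hx (hγ_pos _ (by linarith)))

lemma theta_eq (k γ : ℝ → ℝ) (ρ : ℝ) (hk_pos : ∀ x : ℝ, 0 < x → 0 < k x)
    (hγ_pos : ∀ x : ℝ, 0 < x → 0 < γ x) (n : ℤ) :
    thetaF k γ ρ n = (k (2 * xi ρ n) / k (xi ρ n)) * (γ (2 * xi ρ n) / γ (4 * xi ρ n)) := by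
  have hx := xi_pos ρ n
  have h4 : (4 : ℝ) * xi ρ n = 2 * xi ρ (n+1) := by rw [xi_succ]; ring
  rw [thetaF, zeta_eq, zeta_eq, xi_succ, h4, xi_succ]
  have hl2 : 0 < Real.log 2 := Real.log_pos one_lt_two
  have h1 : 0 < k (xi ρ n) := hk_pos _ hx
  have h2 : 0 < k (2 * xi ρ n) := hk_pos _ (by linarith)
  have h3 : 0 < γ (2 * xi ρ n) := hγ_pos _ (by linarith)
  have h5 : 0 < γ (2 * (2 * xi ρ n)) := hγ_pos _ (by linarith)
  field_simp

lemma exp_neg_le_five_pow {x : ℝ} (hx : 0 < x) : Real.exp (-x) ≤ (5 / x) ^ (5:ℕ) := by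
  have h1 : (x/5 + 1) ^ (5:ℕ) ≤ Real.exp x := by
    calc (x/5 + 1) ^ (5:ℕ) ≤ (Real.exp (x/5)) ^ (5:ℕ) :=
          pow_le_pow_left₀ (by positivity) (Real.add_one_le_exp (x/5)) 5
    _ = Real.exp ((5:ℕ) * (x/5)) := (Real.exp_nat_mul _ 5).symm
    _ = Real.exp x := by rw [show ((5:ℕ):ℝ) * (x/5) = x by push_cast; ring]
  have h2 : (x/5) ^ (5:ℕ) ≤ Real.exp x :=
    le_trans (pow_le_pow_left₀ (by positivity) (by linarith) 5) h1
  have h3 : (0:ℝ) < (x/5) ^ (5:ℕ) := by positivity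
  calc Real.exp (-x) = (Real.exp x)⁻¹ := Real.exp_neg x
  _ ≤ ((x/5) ^ (5:ℕ))⁻¹ := by
        exact inv_anti₀ h3 h2
  _ = (5 / x) ^ (5:ℕ) := by rw [← inv_pow, inv_div]

section bounds
variable (k γ : ℝ → ℝ) (ρ p q ck Ck cγ Cγ : ℝ)
variable (hp : 0 < p) (hq : 0 < q) (hck : 0 < ck) (hcγ : 0 < cγ)
variable (hkb : ∀ x : ℝ, 0 < x → ck * (1 + x ^ p) ≤ k x ∧ k x ≤ Ck * (1 + x ^ p))
variable (hγb : ∀ x : ℝ, 0 < x → cγ * (1 + x ^ q) ≤ γ x ∧ γ x ≤ Cγ * (1 + x ^ q))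

include hp hq hck hcγ hkb hγb

lemma theta_bounds (n : ℤ) :
    (ck / Ck) * (cγ / (Cγ * 2 ^ q)) ≤ thetaF k γ ρ n ∧
      thetaF k γ ρ n ≤ ((Ck / ck) * 2 ^ p) * (Cγ / cγ) := by
  -- positivity of k, γ on positives
  have hkpos : ∀ x : ℝ, 0 < x → 0 < k x := fun x hx => lt_of_lt_of_le
    (by have := Real.rpow_pos_of_pos hx p; nlinarith) (hkb x hx).1
  have hγpos : ∀ x : ℝ, 0 < x → 0 < γ x := fun x hx => lt_of_lt_of_le
    (by have := Real.rpow_pos_of_pos hx q; nlinarith) (hγb x hx).1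
  set x := xi ρ n with hxdef
  have hx : 0 < x := xi_pos ρ n
  have hx2 : (0:ℝ) < 2 * x := by linarith
  have hx4 : (0:ℝ) < 4 * x := by linarith
  have hCk : 0 < Ck := by
    have h := hkb x hx
    have hpp := Real.rpow_pos_of_pos hx p
    nlinarith [hkpos x hx]
  have hCγ : 0 < Cγ := by
    have h := hγb x hx
    have hpp := Real.rpow_pos_of_pos hx q
    nlinarith [hγpos x hx]
  have h2p : (1:ℝ) ≤ 2 ^ p := Real.one_le_rpow one_le_two hp.le
  have h2q : (1:ℝ) ≤ 2 ^ q := Real.one_le_rpow one_le_two hq.le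
  have hm2p : (2 * x) ^ p = 2 ^ p * x ^ p := Real.mul_rpow (by norm_num) hx.le
  have hm4q : (4 * x) ^ q = 2 ^ q * (2 * x) ^ q := by
    rw [show (4:ℝ) * x = 2 * (2 * x) by ring, Real.mul_rpow (by norm_num) hx2.le]
  have hxp := Real.rpow_pos_of_pos hx p
  have hx2p := Real.rpow_pos_of_pos hx2 p
  have hx2q := Real.rpow_pos_of_pos hx2 q
  have hx4q := Real.rpow_pos_of_pos hx4 q
  have hmono_p : x ^ p ≤ (2 * x) ^ p := Real.rpow_le_rpow hx.le (by linarith) hp.le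
  have hmono_q : (2 * x) ^ q ≤ (4 * x) ^ q := Real.rpow_le_rpow hx2.le (by linarith) hq.le
  have hk1 := hkb x hx
  have hk2 := hkb (2 * x) hx2
  have hγ2 := hγb (2 * x) hx2
  have hγ4 := hγb (4 * x) hx4
  have hkx := hkpos x hx
  have hk2x := hkpos (2 * x) hx2
  have hγ2x := hγpos (2 * x) hx2
  have hγ4x := hγpos (4 * x) hx4
  rw [theta_eq k γ ρ hkpos hγpos n, ← hxdef]
  have hA_lb : ck / Ck ≤ k (2 * x) / k x := by
    rw [div_le_div_iff₀ hCk hkx]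
    calc ck * k x ≤ ck * (Ck * (1 + x ^ p)) := mul_le_mul_of_nonneg_left hk1.2 hck.le
    _ ≤ ck * (Ck * (1 + (2 * x) ^ p)) := by
        apply mul_le_mul_of_nonneg_left _ hck.le
        apply mul_le_mul_of_nonneg_left _ hCk.le
        linarith
    _ = Ck * (ck * (1 + (2 * x) ^ p)) := by ring
    _ ≤ Ck * k (2 * x) := mul_le_mul_of_nonneg_left hk2.1 hCk.le
    _ = k (2 * x) * Ck := by ring
  have hB_lb : cγ / (Cγ * 2 ^ q) ≤ γ (2 * x) / γ (4 * x) := by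
    rw [div_le_div_iff₀ (by positivity) hγ4x]
    calc cγ * γ (4 * x) ≤ cγ * (Cγ * (1 + (4 * x) ^ q)) :=
        mul_le_mul_of_nonneg_left hγ4.2 hcγ.le
    _ ≤ cγ * (Cγ * (2 ^ q * (1 + (2 * x) ^ q))) := by
        apply mul_le_mul_of_nonneg_left _ hcγ.le
        apply mul_le_mul_of_nonneg_left _ hCγ.le
        rw [hm4q]; nlinarith
    _ = (Cγ * 2 ^ q) * (cγ * (1 + (2 * x) ^ q)) := by ring
    _ ≤ (Cγ * 2 ^ q) * γ (2 * x) := mul_le_mul_of_nonneg_left hγ2.1 (by positivity)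
    _ = γ (2 * x) * (Cγ * 2 ^ q) := by ring
  have hA_ub : k (2 * x) / k x ≤ (Ck / ck) * 2 ^ p := by
    rw [div_le_iff₀ hkx]
    calc k (2 * x) ≤ Ck * (1 + (2 * x) ^ p) := hk2.2
    _ ≤ Ck * (2 ^ p * (1 + x ^ p)) := by
        apply mul_le_mul_of_nonneg_left _ hCk.le
        rw [hm2p]; nlinarith
    _ = (Ck / ck * 2 ^ p) * (ck * (1 + x ^ p)) := by field_simp
    _ ≤ (Ck / ck * 2 ^ p) * k x := mul_le_mul_of_nonneg_left hk1.1 (by positivity)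
  have hB_ub : γ (2 * x) / γ (4 * x) ≤ Cγ / cγ := by
    rw [div_le_div_iff₀ hγ4x hcγ]
    calc γ (2 * x) * cγ = cγ * γ (2 * x) := by ring
    _ ≤ cγ * (Cγ * (1 + (2 * x) ^ q)) := mul_le_mul_of_nonneg_left hγ2.2 hcγ.le
    _ ≤ cγ * (Cγ * (1 + (4 * x) ^ q)) := by
        apply mul_le_mul_of_nonneg_left _ hcγ.le
        apply mul_le_mul_of_nonneg_left _ hCγ.le
        linarith
    _ = Cγ * (cγ * (1 + (4 * x) ^ q)) := by ring
    _ ≤ Cγ * γ (4 * x) := mul_le_mul_of_nonneg_left hγ4.1 hCγ.le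
  have hkratio_pos : 0 < k (2 * x) / k x := div_pos hk2x hkx
  have hγratio_pos : 0 < γ (2 * x) / γ (4 * x) := div_pos hγ2x hγ4x
  constructor
  · exact mul_le_mul hA_lb hB_lb (by positivity) hkratio_pos.le
  · exact mul_le_mul hA_ub hB_ub hγratio_pos.le (by positivity)

end bounds
section bounds2
variable (k γ : ℝ → ℝ) (ρ p q ck Ck cγ Cγ : ℝ)
variable (hl2 : 0 < Real.log 2)
variable (hp : 0 < p) (hq : 0 < q) (hck : 0 < ck) (hcγ : 0 < cγ) (hCk : 0 < Ck) (hCγ : 0 < Cγ)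
variable (hρ0 : 0 ≤ ρ) (hρ1 : ρ < 1)
variable (hkb : ∀ x : ℝ, 0 < x → ck * (1 + x ^ p) ≤ k x ∧ k x ≤ Ck * (1 + x ^ p))
variable (hγb : ∀ x : ℝ, 0 < x → cγ * (1 + x ^ q) ≤ γ x ∧ γ x ≤ Cγ * (1 + x ^ q))

lemma xi_le_two_zpow (n : ℤ) (hρ0 : 0 ≤ ρ) (hρ1 : ρ < 1) :
    (2:ℝ) ^ n ≤ xi ρ n ∧ xi ρ n ≤ 2 * (2:ℝ) ^ n := by
  have h1 : xi ρ n = (2:ℝ) ^ n * (2:ℝ) ^ ρ := by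
    rw [xi, Real.rpow_add two_pos, Real.rpow_intCast]
  have h2 : (1:ℝ) ≤ (2:ℝ) ^ ρ := Real.one_le_rpow one_le_two hρ0
  have h3 : (2:ℝ) ^ ρ ≤ 2 := by
    have := Real.rpow_le_rpow_of_exponent_le one_le_two hρ1.le
    rwa [Real.rpow_one] at this
  have hz : (0:ℝ) < (2:ℝ) ^ n := zpow_pos two_pos n
  constructor
  · rw [h1]; nlinarith
  · rw [h1]; nlinarith

include hl2 hp hq hck hcγ hCk hCγ hρ0 hρ1 hkb hγb

set_option maxHeartbeats 1000000 in
lemma weight_ub (hq2 : q ≤ 2) (n : ℤ) :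
    (2:ℝ) ^ ((n:ℝ) + ρ + 1) * (zeta k γ ρ n)⁻¹ ≤
      (Cγ / (Real.log 2 * ck)) * (128 * ((4:ℝ) ^ n + (16:ℝ) ^ n)) := by
  have hkpos : ∀ x : ℝ, 0 < x → 0 < k x := fun x hx => lt_of_lt_of_le
    (by have := Real.rpow_pos_of_pos hx p; nlinarith) (hkb x hx).1
  have hγpos : ∀ x : ℝ, 0 < x → 0 < γ x := fun x hx => lt_of_lt_of_le
    (by have := Real.rpow_pos_of_pos hx q; nlinarith) (hγb x hx).1
  set x := xi ρ n with hxdef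
  have hx : 0 < x := xi_pos ρ n
  have hx2 : (0:ℝ) < 2 * x := by linarith
  have hxp := Real.rpow_pos_of_pos hx p
  have hx2q := Real.rpow_pos_of_pos hx2 q
  have hkx := hkpos x hx
  have hγ2x := hγpos (2*x) hx2
  have hζpos : 0 < zeta k γ ρ n := zeta_pos k γ ρ hkpos hγpos n
  have hLpos : 0 < Real.log 2 * ck / (x * (Cγ * (1 + (2*x) ^ q))) := by positivity
  have hζlb : Real.log 2 * ck / (x * (Cγ * (1 + (2*x) ^ q))) ≤ zeta k γ ρ n := by
    rw [zeta_eq]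
    rw [← hxdef]
    apply div_le_div₀ (by positivity) _ (by positivity) _
    · have h1 : ck ≤ k x := by nlinarith [(hkb x hx).1, hxp, hck]
      exact mul_le_mul_of_nonneg_left h1 hl2.le
    · exact mul_le_mul_of_nonneg_left (hγb (2*x) hx2).2 hx.le
  have hζinv : (zeta k γ ρ n)⁻¹ ≤ x * (Cγ * (1 + (2*x) ^ q)) / (Real.log 2 * ck) := by
    have h := inv_anti₀ hLpos hζlb
    rwa [inv_div] at h
  have hw := xi_le_two_zpow ρ n hρ0 hρ1
  have hzp : (0:ℝ) < (2:ℝ) ^ n := zpow_pos two_pos n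
  have h4 : ((2:ℝ) ^ n) * ((2:ℝ) ^ n) = (4:ℝ) ^ n := by
    rw [← mul_zpow]; norm_num
  have h16 : ((4:ℝ) ^ n) * ((4:ℝ) ^ n) = (16:ℝ) ^ n := by
    rw [← mul_zpow]; norm_num
  -- numerator polynomial bound
  have h2q4 : (2:ℝ) ^ q ≤ 4 := by
    have := Real.rpow_le_rpow_of_exponent_le one_le_two hq2
    rwa [show ((2:ℝ) ^ (2:ℝ)) = 4 by
      rw [show (2:ℝ) = ((2:ℕ):ℝ) by norm_num, Real.rpow_natCast]; norm_num] at this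
  have hm2q : (2*x) ^ q = 2 ^ q * x ^ q := Real.mul_rpow (by norm_num) hx.le
  have hxq := Real.rpow_pos_of_pos hx q
  have hx2r : x ^ (2:ℝ) = x * x := by
    rw [show (2:ℝ) = ((2:ℕ):ℝ) by norm_num, Real.rpow_natCast]; ring
  have hx4r : x ^ (4:ℝ) = x * x * (x * x) := by
    rw [show (4:ℝ) = ((4:ℕ):ℝ) by norm_num, Real.rpow_natCast]; ring
  have hsplit : x * x * (x ^ q) ≤ x * x + x * x * (x * x) := by
    have hxx : x * x * x ^ q = x ^ ((2:ℝ) + q) := by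
      rw [Real.rpow_add hx, hx2r]
    have hnn : (0:ℝ) ≤ x * x * (x * x) := by positivity
    have hnn2 : (0:ℝ) ≤ x * x := by positivity
    rcases le_or_gt x 1 with hle | hgt
    · have h1 : x ^ ((2:ℝ)+q) ≤ x ^ (2:ℝ) :=
        Real.rpow_le_rpow_of_exponent_ge hx hle (by linarith)
      rw [hx2r] at h1
      rw [hxx]
      linarith
    · have h1 : x ^ ((2:ℝ)+q) ≤ x ^ (4:ℝ) :=
        Real.rpow_le_rpow_of_exponent_le hgt.le (by linarith)
      rw [hx4r] at h1
      rw [hxx]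
      linarith
  calc (2:ℝ) ^ ((n:ℝ) + ρ + 1) * (zeta k γ ρ n)⁻¹
      = 2 * x * (zeta k γ ρ n)⁻¹ := by rw [rpow_succ_eq, hxdef]
  _ ≤ 2 * x * (x * (Cγ * (1 + (2*x) ^ q)) / (Real.log 2 * ck)) :=
      mul_le_mul_of_nonneg_left hζinv (by linarith)
  _ = (Cγ / (Real.log 2 * ck)) * (2 * (x*x) * (1 + (2*x) ^ q)) := by
      field_simp
  _ ≤ (Cγ / (Real.log 2 * ck)) * (128 * ((4:ℝ) ^ n + (16:ℝ) ^ n)) := by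
      apply mul_le_mul_of_nonneg_left _ (by positivity)
      have h4p : (0:ℝ) < (4:ℝ)^n := zpow_pos (by norm_num) n
      have h16p : (0:ℝ) < (16:ℝ)^n := zpow_pos (by norm_num) n
      have e1 : 2 * (x*x) * (1 + (2*x)^q) = 2*(x*x) + 2*(2:ℝ)^q*(x*x*x^q) := by
        rw [hm2q]; ring
      have e3 : x ≤ 2 * (2:ℝ)^n := hw.2
      have e4 : x*x ≤ 4 * ((4:ℝ)^n) := by
        calc x*x ≤ (2*(2:ℝ)^n) * (2*(2:ℝ)^n) := mul_le_mul e3 e3 hx.le (by positivity)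
        _ = 4 * ((2:ℝ)^n * (2:ℝ)^n) := by ring
        _ = 4 * ((4:ℝ)^n) := by rw [h4]
      have e5 : x*x*(x*x) ≤ 16 * ((16:ℝ)^n) := by
        calc x*x*(x*x) ≤ (4*((4:ℝ)^n)) * (4*((4:ℝ)^n)) :=
            mul_le_mul e4 e4 (by positivity) (by positivity)
        _ = 16 * ((4:ℝ)^n * (4:ℝ)^n) := by ring
        _ = 16 * ((16:ℝ)^n) := by rw [h16]
      have hy : (0:ℝ) ≤ x*x*x^q := by positivity
      have t2 : 2*(2:ℝ)^q*(x*x*x^q) ≤ 8*(x*x*x^q) := by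
        calc 2*(2:ℝ)^q*(x*x*x^q) = (2*(2:ℝ)^q)*(x*x*x^q) := by ring
        _ ≤ 8*(x*x*x^q) := mul_le_mul_of_nonneg_right (by linarith) hy
      rw [e1]
      linarith [t2, hsplit, e4, e5, h4p, h16p,
        mul_le_mul_of_nonneg_left hsplit (show (0:ℝ) ≤ 8 by norm_num)]
set_option maxHeartbeats 1000000 in
lemma weight_lb (hq1 : 1 ≤ q) (hp2 : p ≤ 2) (n : ℤ) (hn : 0 ≤ n) :
    2 * cγ / (Real.log 2 * Ck) ≤ (2:ℝ) ^ ((n:ℝ) + ρ + 1) * (zeta k γ ρ n)⁻¹ := by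
  have hkpos : ∀ x : ℝ, 0 < x → 0 < k x := fun x hx => lt_of_lt_of_le
    (by have := Real.rpow_pos_of_pos hx p; nlinarith) (hkb x hx).1
  have hγpos : ∀ x : ℝ, 0 < x → 0 < γ x := fun x hx => lt_of_lt_of_le
    (by have := Real.rpow_pos_of_pos hx q; nlinarith) (hγb x hx).1
  set x := xi ρ n with hxdef
  have hx : 0 < x := xi_pos ρ n
  have hx1 : 1 ≤ x := by
    rw [hxdef, xi]
    apply Real.one_le_rpow one_le_two
    have : (0:ℝ) ≤ (n:ℝ) := by exact_mod_cast hn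
    linarith
  have hx2 : (0:ℝ) < 2 * x := by linarith
  have hxp := Real.rpow_pos_of_pos hx p
  have hx2q := Real.rpow_pos_of_pos hx2 q
  have hkx := hkpos x hx
  have hγ2x := hγpos (2*x) hx2
  have hζpos : 0 < zeta k γ ρ n := zeta_pos k γ ρ hkpos hγpos n
  have hUpos : 0 < Real.log 2 * (Ck * (1 + x ^ p)) / (x * (cγ * (1 + (2*x) ^ q))) := by
    positivity
  have hζub : zeta k γ ρ n ≤ Real.log 2 * (Ck * (1 + x ^ p)) / (x * (cγ * (1 + (2*x)^q))) := by
    rw [zeta_eq, ← hxdef]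
    apply div_le_div₀ (by positivity) _ (by positivity) _
    · exact mul_le_mul_of_nonneg_left (hkb x hx).2 hl2.le
    · exact mul_le_mul_of_nonneg_left (hγb (2*x) hx2).1 hx.le
  have hζinv : x * (cγ * (1 + (2*x) ^ q)) / (Real.log 2 * (Ck * (1 + x ^ p)))
      ≤ (zeta k γ ρ n)⁻¹ := by
    have h := inv_anti₀ hζpos hζub
    rwa [inv_div] at h
  have hx2r : x ^ (2:ℝ) = x * x := by
    rw [show (2:ℝ) = ((2:ℕ):ℝ) by norm_num, Real.rpow_natCast]; ring
  have hxple : x ^ p ≤ x * x := by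
    have := Real.rpow_le_rpow_of_exponent_le hx1 hp2
    rwa [hx2r] at this
  have h2xq : 2 * x ≤ (2*x) ^ q := by
    have h1 : (2*x) ^ (1:ℝ) ≤ (2*x) ^ q :=
      Real.rpow_le_rpow_of_exponent_le (by linarith) hq1
    rwa [Real.rpow_one] at h1
  calc 2 * cγ / (Real.log 2 * Ck)
      ≤ 2 * x * (x * (cγ * (1 + (2*x) ^ q)) / (Real.log 2 * (Ck * (1 + x ^ p)))) := by
        rw [← mul_div_assoc, div_le_div_iff₀ (by positivity) (by positivity)]
        have hq3 : (3:ℝ) ≤ 1 + (2*x)^q := by nlinarith [h2xq, hx1]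
        have k3 : (1:ℝ) ≤ x*x := by nlinarith [hx1]
        have k4 : (x*x)*3 ≤ x*(x*(1+(2*x)^q)) := by nlinarith [hq3, mul_pos hx hx]
        have key : 2 * (1 + x ^ p) ≤ 2 * (x * (x * (1 + (2*x)^q))) := by
          nlinarith [hxple, k3, k4]
        calc 2 * cγ * (Real.log 2 * (Ck * (1 + x ^ p)))
            = (Real.log 2 * Ck * cγ) * (2 * (1 + x ^ p)) := by ring
        _ ≤ (Real.log 2 * Ck * cγ) * (2 * (x * (x * (1 + (2*x)^q)))) := by
            apply mul_le_mul_of_nonneg_left key (by positivity)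
        _ = 2 * x * (x * (cγ * (1 + (2*x)^q))) * (Real.log 2 * Ck) := by ring
  _ ≤ 2 * x * (zeta k γ ρ n)⁻¹ := mul_le_mul_of_nonneg_left hζinv (by linarith)
  _ = (2:ℝ) ^ ((n:ℝ) + ρ + 1) * (zeta k γ ρ n)⁻¹ := by rw [rpow_succ_eq, hxdef]

end bounds2
lemma summable_mix (A : ℝ) (hA : 0 < A) :
    Summable (fun n : ℤ => ((4:ℝ) ^ n + (16:ℝ) ^ n) * Real.exp (-(A * (2:ℝ) ^ n))) := by
  apply Summable.of_nat_of_neg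
  · -- positive side
    have hpt : ∀ n : ℕ, ((4:ℝ) ^ (n:ℤ) + (16:ℝ) ^ (n:ℤ)) * Real.exp (-(A * (2:ℝ) ^ (n:ℤ)))
        ≤ (3125 / A^5) * ((1/8:ℝ) ^ n + (1/2:ℝ) ^ n) := by
      intro n
      have h2n : (0:ℝ) < (2:ℝ) ^ (n:ℕ) := by positivity
      have hx : (0:ℝ) < A * 2 ^ (n:ℕ) := by positivity
      have hexp : Real.exp (-(A * (2:ℝ) ^ (n:ℕ))) ≤ (5 / (A * 2 ^ (n:ℕ))) ^ (5:ℕ) :=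
        exp_neg_le_five_pow hx
      have hz4 : ((4:ℝ) ^ ((n:ℕ):ℤ)) = (4:ℝ) ^ (n:ℕ) := zpow_natCast _ _
      have hz16 : ((16:ℝ) ^ ((n:ℕ):ℤ)) = (16:ℝ) ^ (n:ℕ) := zpow_natCast _ _
      have hz2 : ((2:ℝ) ^ ((n:ℕ):ℤ)) = (2:ℝ) ^ (n:ℕ) := zpow_natCast _ _
      rw [hz4, hz16, hz2]
      have key : ((4:ℝ) ^ (n:ℕ) + 16 ^ (n:ℕ)) * (5 / (A * 2 ^ (n:ℕ))) ^ (5:ℕ)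
          = (3125 / A^5) * ((1/8:ℝ) ^ n + (1/2:ℝ) ^ n) := by
        have e32 : ((2:ℝ) ^ (n:ℕ)) ^ (5:ℕ) = (32:ℝ) ^ (n:ℕ) := by
          rw [← pow_mul, pow_mul']; norm_num
        have e1 : (5 / (A * 2 ^ (n:ℕ))) ^ (5:ℕ) = (3125/A^5) * (1/32:ℝ) ^ n := by
          have h32inv : (1/32:ℝ)^n = ((32:ℝ)^n)⁻¹ := by rw [one_div, inv_pow]
          rw [div_pow, mul_pow, e32, h32inv]
          have h32 : ((32:ℝ) ^ (n:ℕ)) ≠ 0 := by positivity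
          have hA5 : (A:ℝ)^5 ≠ 0 := by positivity
          field_simp
          norm_num
        rw [e1]
        calc ((4:ℝ) ^ (n:ℕ) + 16 ^ (n:ℕ)) * ((3125/A^5) * (1/32:ℝ) ^ n)
            = (3125/A^5) * (((4:ℝ) * (1/32)) ^ n + ((16:ℝ) * (1/32)) ^ n) := by
              rw [mul_pow, mul_pow]; ring
        _ = (3125 / A^5) * ((1/8:ℝ) ^ n + (1/2:ℝ) ^ n) := by norm_num
      calc ((4:ℝ) ^ (n:ℕ) + 16 ^ (n:ℕ)) * Real.exp (-(A * (2:ℝ) ^ (n:ℕ)))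
          ≤ ((4:ℝ) ^ (n:ℕ) + 16 ^ (n:ℕ)) * (5 / (A * 2 ^ (n:ℕ))) ^ (5:ℕ) := by
            apply mul_le_mul_of_nonneg_left hexp (by positivity)
      _ = (3125 / A^5) * ((1/8:ℝ) ^ n + (1/2:ℝ) ^ n) := key
    apply Summable.of_nonneg_of_le (fun n => by positivity) hpt
    apply Summable.mul_left
    exact (summable_geometric_of_lt_one (by norm_num) (by norm_num)).add
      (summable_geometric_of_lt_one (by norm_num) (by norm_num))
  · -- negative side
    have hpt : ∀ n : ℕ, ((4:ℝ) ^ (-(n:ℤ)) + (16:ℝ) ^ (-(n:ℤ))) *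
        Real.exp (-(A * (2:ℝ) ^ (-(n:ℤ)))) ≤ (1/4:ℝ) ^ n + (1/16:ℝ) ^ n := by
      intro n
      have h1 : Real.exp (-(A * (2:ℝ) ^ (-(n:ℤ)))) ≤ 1 := by
        rw [Real.exp_le_one_iff]
        have : (0:ℝ) < (2:ℝ) ^ (-(n:ℤ)) := zpow_pos two_pos _
        nlinarith
      have e4 : (4:ℝ) ^ (-(n:ℤ)) = (1/4:ℝ) ^ n := by
        rw [zpow_neg, zpow_natCast, one_div, inv_pow]
      have e16 : (16:ℝ) ^ (-(n:ℤ)) = (1/16:ℝ) ^ n := by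
        rw [zpow_neg, zpow_natCast, one_div, inv_pow]
      rw [e4, e16]
      have hnn : (0:ℝ) ≤ (1/4:ℝ) ^ n + (1/16:ℝ) ^ n := by positivity
      nlinarith [mul_le_mul_of_nonneg_left h1 hnn]
    apply Summable.of_nonneg_of_le (fun n => by positivity) hpt
    exact (summable_geometric_of_lt_one (by norm_num) (by norm_num)).add
      (summable_geometric_of_lt_one (by norm_num) (by norm_num))

lemma tail_facts (k γ : ℝ → ℝ) (ρ B₀ : ℝ)
    (hB : ∀ j : ℤ, |Real.log (thetaF k γ ρ j)| ≤ B₀) (n : ℤ) :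
    Summable (fun m : ℕ => (2:ℝ) ^ (-(n + 1 + (m:ℤ))) * Real.log (thetaF k γ ρ (n + (m:ℤ)))) ∧
    |(2:ℝ) ^ n * ∑' m : ℕ, (2:ℝ) ^ (-(n + 1 + (m:ℤ))) * Real.log (thetaF k γ ρ (n + (m:ℤ)))|
      ≤ B₀ := by
  have hB0 : 0 ≤ B₀ := le_trans (abs_nonneg _) (hB 0)
  set c : ℝ := (2:ℝ) ^ (-(n + 1)) with hc
  have hcpos : 0 < c := zpow_pos two_pos _
  have hbound : ∀ m : ℕ, ‖(2:ℝ) ^ (-(n + 1 + (m:ℤ))) * Real.log (thetaF k γ ρ (n + (m:ℤ)))‖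
      ≤ (c * B₀) * (1/2:ℝ) ^ m := by
    intro m
    have h2m : (2:ℝ) ^ (-(m:ℤ)) = (1/2:ℝ) ^ m := by
      rw [zpow_neg, zpow_natCast, one_div, inv_pow]
    have hsplit : (2:ℝ) ^ (-(n + 1 + (m:ℤ))) = c * (1/2:ℝ) ^ m := by
      rw [show -(n + 1 + (m:ℤ)) = -(n+1) + (-(m:ℤ)) by ring,
        zpow_add₀ (two_ne_zero : (2:ℝ) ≠ 0), h2m, ← hc]
    rw [Real.norm_eq_abs, abs_mul, hsplit]
    have h2 : |c * (1/2:ℝ) ^ m| = c * (1/2:ℝ) ^ m := abs_of_pos (by positivity)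
    rw [h2]
    calc c * (1/2:ℝ) ^ m * |Real.log (thetaF k γ ρ (n + (m:ℤ)))|
        ≤ c * (1/2:ℝ) ^ m * B₀ := by
          apply mul_le_mul_of_nonneg_left (hB _) (by positivity)
    _ = (c * B₀) * (1/2:ℝ) ^ m := by ring
  have hgs : HasSum (fun m : ℕ => (c * B₀) * (1/2:ℝ) ^ m) ((c * B₀) * 2) := by
    have := hasSum_geometric_of_lt_one (show (0:ℝ) ≤ 1/2 by norm_num)
      (show (1/2:ℝ) < 1 by norm_num)
    have h2 : ((1:ℝ) - 1/2)⁻¹ = 2 := by norm_num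
    rw [h2] at this
    exact this.mul_left _
  constructor
  · exact Summable.of_norm_bounded hgs.summable hbound
  · have habs : ‖∑' m : ℕ, (2:ℝ) ^ (-(n + 1 + (m:ℤ))) * Real.log (thetaF k γ ρ (n + (m:ℤ)))‖
        ≤ (c * B₀) * 2 := tsum_of_norm_bounded hgs hbound
    rw [Real.norm_eq_abs] at habs
    rw [abs_mul, abs_of_pos (zpow_pos two_pos n)]
    have hkey : (2:ℝ) ^ n * (c * B₀ * 2) = B₀ := by
      rw [hc]
      rw [show (2:ℝ) ^ n * ((2:ℝ) ^ (-(n+1)) * B₀ * 2)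
          = ((2:ℝ) ^ n * (2:ℝ) ^ (-(n+1))) * (B₀ * 2) by ring]
      rw [← zpow_add₀ (two_ne_zero : (2:ℝ) ≠ 0) n (-(n+1))]
      rw [show n + -(n+1) = (-1 : ℤ) by ring]
      rw [show ((2:ℝ) ^ (-1 : ℤ)) = 1/2 by norm_num]
      ring
    calc (2:ℝ) ^ n * |∑' m : ℕ, (2:ℝ) ^ (-(n + 1 + (m:ℤ))) *
          Real.log (thetaF k γ ρ (n + (m:ℤ)))|
        ≤ (2:ℝ) ^ n * ((c * B₀) * 2) := by
          apply mul_le_mul_of_nonneg_left habs (le_of_lt (zpow_pos two_pos n))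
    _ = B₀ := hkey

def tailS (k γ : ℝ → ℝ) (ρ : ℝ) (n : ℤ) : ℝ :=
  ∑' m : ℕ, (2:ℝ) ^ (-(n + 1 + (m:ℤ))) * Real.log (thetaF k γ ρ (n + (m:ℤ)))

def QF (k γ : ℝ → ℝ) (ρ : ℝ) (n : ℤ) : ℝ :=
  (2:ℝ) ^ ((n:ℝ) + ρ + 1) * (zeta k γ ρ n)⁻¹ * Real.exp (-((2:ℝ) ^ n * tailS k γ ρ n))

lemma term_eq (k γ : ℝ → ℝ) (ρ A : ℝ) (n : ℤ) :
    (2:ℝ) ^ ((n:ℝ) + ρ + 1) * (zeta k γ ρ n)⁻¹ * alphaF k γ ρ A n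
      = QF k γ ρ n * Real.exp (-(A * (2:ℝ) ^ n)) := by
  unfold QF alphaF tailS
  ring
set_option maxHeartbeats 2000000 in
/-- The mass function `M(A) = Σ_{n∈ℤ} 2^{n+ρ+1} ζ_{n,ρ}⁻¹ α_n(A,ρ)` is
well-defined for `A > 0`, strictly decreasing on `(0,∞)`, tends to `0` at `∞` and to `∞` at `0⁺`;
hence for each `M > 0` there is a unique `A_M > 0` with `M(A_M) = M`. -/
theorem stmt3
    (α β αb βb k₀ γ₀ : ℝ)
    (hα : α ∈ Set.Ioo (0:ℝ) 1) (hβ : β ∈ Set.Ioo (1:ℝ) 2)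
    (hαb : 1 < αb) (hβb : 1 < βb) (hk₀ : 0 < k₀) (hγ₀ : 0 < γ₀)
    (k γ : ℝ → ℝ)
    (hk_cont : ContinuousOn k (Set.Ici 0)) (hk_pos : ∀ ξ : ℝ, 0 ≤ ξ → 0 < k ξ)
    (hk_inf : Tendsto (fun ξ : ℝ => k ξ / ξ ^ (α + 1)) atTop (𝓝 1))
    (hk_0 : (fun ξ : ℝ => k ξ - k₀) =O[𝓝[>] 0] fun ξ : ℝ => ξ ^ αb)
    (hγ_cont : ContinuousOn γ (Set.Ioi 0)) (hγ_pos : ∀ ξ : ℝ, 0 < ξ → 0 < γ ξ)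
    (hγ_inf : Tendsto (fun ξ : ℝ => γ ξ / ξ ^ β) atTop (𝓝 1))
    (hγ_0 : (fun ξ : ℝ => γ ξ - γ₀) =O[𝓝[>] 0] fun ξ : ℝ => ξ ^ βb)
    (ρ : ℝ) (hρ : ρ ∈ Set.Ico (0:ℝ) 1) :
    (∀ A : ℝ, 0 < A →
      Summable (fun n : ℤ => (2:ℝ) ^ ((n:ℝ) + ρ + 1) * (zeta k γ ρ n)⁻¹ * alphaF k γ ρ A n)) ∧
    StrictAntiOn
      (fun A : ℝ => ∑' n : ℤ, (2:ℝ) ^ ((n:ℝ) + ρ + 1) * (zeta k γ ρ n)⁻¹ * alphaF k γ ρ A n)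
      (Set.Ioi 0) ∧
    Tendsto
      (fun A : ℝ => ∑' n : ℤ, (2:ℝ) ^ ((n:ℝ) + ρ + 1) * (zeta k γ ρ n)⁻¹ * alphaF k γ ρ A n)
      atTop (𝓝 0) ∧
    Tendsto
      (fun A : ℝ => ∑' n : ℤ, (2:ℝ) ^ ((n:ℝ) + ρ + 1) * (zeta k γ ρ n)⁻¹ * alphaF k γ ρ A n)
      (𝓝[>] 0) atTop ∧
    (∀ M : ℝ, 0 < M → ∃! A : ℝ, 0 < A ∧
      (∑' n : ℤ, (2:ℝ) ^ ((n:ℝ) + ρ + 1) * (zeta k γ ρ n)⁻¹ * alphaF k γ ρ A n) = M) := by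
  obtain ⟨hα0, hα1⟩ := hα
  obtain ⟨hβ1, hβ2⟩ := hβ
  obtain ⟨hρ0, hρ1⟩ := hρ
  have hl2 : 0 < Real.log 2 := Real.log_pos one_lt_two
  have hp : 0 < α + 1 := by linarith
  have hp2 : α + 1 ≤ 2 := by linarith
  have hq0 : 0 < β := by linarith
  have hq1 : 1 ≤ β := by linarith
  have hq2 : β ≤ 2 := by linarith
  -- limits at 0⁺
  have hk0' : Tendsto k (𝓝[>] (0:ℝ)) (𝓝 k₀) := by
    have h1 : Tendsto (fun ξ : ℝ => k ξ - k₀) (𝓝[>] (0:ℝ)) (𝓝 0) :=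
      hk_0.trans_tendsto (tendsto_rpow_nhdsGT_zero (by linarith))
    have h2 := h1.add_const k₀
    simpa using h2
  have hγ0' : Tendsto γ (𝓝[>] (0:ℝ)) (𝓝 γ₀) := by
    have h1 : Tendsto (fun ξ : ℝ => γ ξ - γ₀) (𝓝[>] (0:ℝ)) (𝓝 0) :=
      hγ_0.trans_tendsto (tendsto_rpow_nhdsGT_zero (by linarith))
    have h2 := h1.add_const γ₀
    simpa using h2
  obtain ⟨ck, Ck, hck, hkb⟩ := comp_bounds k hp hk₀
    (hk_cont.mono Set.Ioi_subset_Ici_self) (fun x hx => hk_pos x hx.le) hk_inf hk0'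
  obtain ⟨cγ, Cγ, hcγ, hγb⟩ := comp_bounds γ hq0 hγ₀ hγ_cont hγ_pos hγ_inf hγ0'
  have hkpos' : ∀ x : ℝ, 0 < x → 0 < k x := fun x hx => hk_pos x hx.le
  have hCk : 0 < Ck := by
    have h := (hkb 1 one_pos).2
    rw [Real.one_rpow] at h
    nlinarith [hk_pos 1 zero_le_one]
  have hCγ : 0 < Cγ := by
    have h := (hγb 1 one_pos).2
    rw [Real.one_rpow] at h
    nlinarith [hγ_pos 1 one_pos]
  -- theta bounds
  have h2β : (0:ℝ) < (2:ℝ) ^ β := Real.rpow_pos_of_pos two_pos β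
  have h2α : (0:ℝ) < (2:ℝ) ^ (α+1) := Real.rpow_pos_of_pos two_pos (α+1)
  set tl : ℝ := (ck / Ck) * (cγ / (Cγ * 2 ^ β)) with htl_def
  set tu : ℝ := ((Ck / ck) * 2 ^ (α+1)) * (Cγ / cγ) with htu_def
  have htl : 0 < tl := by rw [htl_def]; positivity
  have htu : 0 < tu := by rw [htu_def]; positivity
  have hth : ∀ n : ℤ, tl ≤ thetaF k γ ρ n ∧ thetaF k γ ρ n ≤ tu := fun n =>
    theta_bounds k γ ρ (α+1) β ck Ck cγ Cγ hp hq0 hck hcγ hkb hγb n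
  set B₀ : ℝ := |Real.log tl| + |Real.log tu| with hB₀_def
  have hlogθ : ∀ j : ℤ, |Real.log (thetaF k γ ρ j)| ≤ B₀ := by
    intro j
    have h := hth j
    have hθpos : 0 < thetaF k γ ρ j := lt_of_lt_of_le htl h.1
    have h1 : Real.log tl ≤ Real.log (thetaF k γ ρ j) := Real.log_le_log htl h.1
    have h2 : Real.log (thetaF k γ ρ j) ≤ Real.log tu := Real.log_le_log hθpos h.2
    rw [hB₀_def]
    rw [abs_le]
    constructor
    · have := neg_abs_le (Real.log tl)
      have h3 := abs_nonneg (Real.log tu)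
      linarith
    · have := le_abs_self (Real.log tu)
      have h3 := abs_nonneg (Real.log tl)
      linarith
  have hB0 : 0 ≤ B₀ := le_trans (abs_nonneg _) (hlogθ 0)
  have htail := fun n => tail_facts k γ ρ B₀ hlogθ n
  -- bounds on the A-free factor QF
  have hζpos : ∀ n : ℤ, 0 < zeta k γ ρ n := zeta_pos k γ ρ hkpos' hγ_pos
  have hQpos : ∀ n : ℤ, 0 < QF k γ ρ n := by
    intro n
    unfold QF
    have h1 : (0:ℝ) < (2:ℝ) ^ ((n:ℝ) + ρ + 1) := Real.rpow_pos_of_pos two_pos _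
    have h2 : (0:ℝ) < (zeta k γ ρ n)⁻¹ := inv_pos.mpr (hζpos n)
    positivity
  have hEub : ∀ n : ℤ, Real.exp (-((2:ℝ) ^ n * tailS k γ ρ n)) ≤ Real.exp B₀ := by
    intro n
    apply Real.exp_le_exp.mpr
    have h : |(2:ℝ) ^ n * tailS k γ ρ n| ≤ B₀ := (htail n).2
    have h2 := neg_abs_le ((2:ℝ) ^ n * tailS k γ ρ n)
    have h3 := le_abs_self ((2:ℝ) ^ n * tailS k γ ρ n)
    linarith
  have hElb : ∀ n : ℤ, Real.exp (-B₀) ≤ Real.exp (-((2:ℝ) ^ n * tailS k γ ρ n)) := by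
    intro n
    apply Real.exp_le_exp.mpr
    have h : |(2:ℝ) ^ n * tailS k γ ρ n| ≤ B₀ := (htail n).2
    have h3 := le_abs_self ((2:ℝ) ^ n * tailS k γ ρ n)
    linarith
  set KK : ℝ := (Cγ / (Real.log 2 * ck)) * 128 * Real.exp B₀ with hKK_def
  have hQub : ∀ n : ℤ, QF k γ ρ n ≤ KK * ((4:ℝ) ^ n + (16:ℝ) ^ n) := by
    intro n
    have hw := weight_ub k γ ρ (α+1) β ck Ck cγ Cγ hl2 hp hq0 hck hcγ hCk hCγ hρ0 hρ1
      hkb hγb hq2 n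
    have hwpos : 0 ≤ (2:ℝ) ^ ((n:ℝ) + ρ + 1) * (zeta k γ ρ n)⁻¹ := by
      have h1 : (0:ℝ) < (2:ℝ) ^ ((n:ℝ) + ρ + 1) := Real.rpow_pos_of_pos two_pos _
      have h2 : (0:ℝ) < (zeta k γ ρ n)⁻¹ := inv_pos.mpr (hζpos n)
      positivity
    calc QF k γ ρ n
        = ((2:ℝ) ^ ((n:ℝ) + ρ + 1) * (zeta k γ ρ n)⁻¹) *
          Real.exp (-((2:ℝ) ^ n * tailS k γ ρ n)) := rfl
    _ ≤ ((Cγ / (Real.log 2 * ck)) * (128 * ((4:ℝ) ^ n + (16:ℝ) ^ n))) * Real.exp B₀ :=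
        mul_le_mul hw (hEub n) (Real.exp_pos _).le (by positivity)
    _ = KK * ((4:ℝ) ^ n + (16:ℝ) ^ n) := by rw [hKK_def]; ring
  set p₀ : ℝ := 2 * cγ / (Real.log 2 * Ck) * Real.exp (-B₀) with hp₀_def
  have hp₀ : 0 < p₀ := by rw [hp₀_def]; positivity
  have hQlb : ∀ n : ℤ, 0 ≤ n → p₀ ≤ QF k γ ρ n := by
    intro n hn
    have hw := weight_lb k γ ρ (α+1) β ck Ck cγ Cγ hl2 hp hq0 hck hcγ hCk hCγ hρ0 hρ1
      hkb hγb hq1 hp2 n hn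
    calc p₀ = (2 * cγ / (Real.log 2 * Ck)) * Real.exp (-B₀) := by rw [hp₀_def]
    _ ≤ ((2:ℝ) ^ ((n:ℝ) + ρ + 1) * (zeta k γ ρ n)⁻¹) *
          Real.exp (-((2:ℝ) ^ n * tailS k γ ρ n)) :=
        mul_le_mul hw (hElb n) (Real.exp_pos _).le
          (mul_pos (Real.rpow_pos_of_pos two_pos _) (inv_pos.mpr (hζpos n))).le
    _ = QF k γ ρ n := rfl
  -- summability of the Q-form
  have hsumQ : ∀ A : ℝ, 0 < A →
      Summable (fun n : ℤ => QF k γ ρ n * Real.exp (-(A * (2:ℝ) ^ n))) := by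
    intro A hA
    apply Summable.of_nonneg_of_le
      (fun n => (mul_pos (hQpos n) (Real.exp_pos _)).le)
      (fun n => ?_) ((summable_mix A hA).mul_left KK)
    · calc QF k γ ρ n * Real.exp (-(A * (2:ℝ) ^ n))
          ≤ (KK * ((4:ℝ) ^ n + (16:ℝ) ^ n)) * Real.exp (-(A * (2:ℝ) ^ n)) :=
            mul_le_mul_of_nonneg_right (hQub n) (Real.exp_pos _).le
      _ = KK * (((4:ℝ) ^ n + (16:ℝ) ^ n) * Real.exp (-(A * (2:ℝ) ^ n))) := by ring
  have hsum : ∀ A : ℝ, 0 < A → Summable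
      (fun n : ℤ => (2:ℝ) ^ ((n:ℝ) + ρ + 1) * (zeta k γ ρ n)⁻¹ * alphaF k γ ρ A n) := by
    intro A hA
    exact (hsumQ A hA).congr (fun n => (term_eq k γ ρ A n).symm)
  -- identify the function with its Q-form
  have hFeq : (fun A : ℝ => ∑' n : ℤ,
        (2:ℝ) ^ ((n:ℝ) + ρ + 1) * (zeta k γ ρ n)⁻¹ * alphaF k γ ρ A n)
      = (fun A : ℝ => ∑' n : ℤ, QF k γ ρ n * Real.exp (-(A * (2:ℝ) ^ n))) := by
    funext A
    exact tsum_congr (fun n => term_eq k γ ρ A n)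
  -- strict antitonicity
  have hanti : StrictAntiOn
      (fun A : ℝ => ∑' n : ℤ, QF k γ ρ n * Real.exp (-(A * (2:ℝ) ^ n)))
      (Set.Ioi 0) := by
    intro a ha b hb hab
    simp only
    apply Summable.tsum_lt_tsum (i := (0:ℤ))
    · intro n
      apply mul_le_mul_of_nonneg_left _ (hQpos n).le
      apply Real.exp_le_exp.mpr
      have h2n : (0:ℝ) < (2:ℝ) ^ n := zpow_pos two_pos n
      have := mul_le_mul_of_nonneg_right hab.le h2n.le
      linarith
    · apply mul_lt_mul_of_pos_left _ (hQpos 0)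
      apply Real.exp_lt_exp.mpr
      have h2n : (0:ℝ) < (2:ℝ) ^ (0:ℤ) := zpow_pos two_pos 0
      have := mul_lt_mul_of_pos_right hab h2n
      linarith
    · exact hsumQ b (lt_trans ha hab)
    · exact hsumQ a ha
  -- limit at infinity
  have htends0 : Tendsto
      (fun A : ℝ => ∑' n : ℤ, QF k γ ρ n * Real.exp (-(A * (2:ℝ) ^ n)))
      atTop (𝓝 0) := by
    have h := tendsto_tsum_of_dominated_convergence
      (f := fun (A : ℝ) (n : ℤ) => QF k γ ρ n * Real.exp (-(A * (2:ℝ) ^ n)))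
      (g := fun _ : ℤ => (0:ℝ))
      (bound := fun n : ℤ => QF k γ ρ n * Real.exp (-((1:ℝ) * (2:ℝ) ^ n)))
      (𝓕 := atTop) (hsumQ 1 one_pos) ?_ ?_
    · simpa using h
    · intro n
      have h1 : Tendsto (fun A : ℝ => A * (2:ℝ) ^ n) atTop atTop :=
        Tendsto.atTop_mul_const (zpow_pos two_pos n) tendsto_id
      have h2 : Tendsto (fun A : ℝ => Real.exp (-(A * (2:ℝ) ^ n))) atTop (𝓝 0) :=
        Real.tendsto_exp_neg_atTop_nhds_zero.comp h1
      have h3 := h2.const_mul (QF k γ ρ n)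
      simpa using h3
    · filter_upwards [eventually_ge_atTop (1:ℝ)] with A hA n
      have h2n : (0:ℝ) < (2:ℝ) ^ n := zpow_pos two_pos n
      rw [Real.norm_eq_abs, abs_of_pos (mul_pos (hQpos n) (Real.exp_pos _))]
      apply mul_le_mul_of_nonneg_left _ (hQpos n).le
      apply Real.exp_le_exp.mpr
      have := le_mul_of_one_le_left h2n.le hA
      linarith
  -- limit at 0⁺
  have htendsInf : Tendsto
      (fun A : ℝ => ∑' n : ℤ, QF k γ ρ n * Real.exp (-(A * (2:ℝ) ^ n)))
      (𝓝[>] 0) atTop := by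
    rw [tendsto_atTop]
    intro C
    obtain ⟨N, hN⟩ := exists_nat_ge (2 * C / p₀)
    have hNC : C ≤ (N + 1 : ℝ) * (p₀ / 2) := by
      rw [div_le_iff₀ hp₀] at hN
      nlinarith [hp₀, hN]
    have h2N : (0:ℝ) < (2:ℝ) ^ (N:ℤ) := zpow_pos two_pos _
    set δ : ℝ := Real.log 2 / (2:ℝ) ^ (N:ℤ) with hδ_def
    have hδ : 0 < δ := by rw [hδ_def]; positivity
    filter_upwards [Ioo_mem_nhdsGT_of_mem (Set.mem_Ico.mpr ⟨le_refl (0:ℝ), hδ⟩)] with A hA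
    obtain ⟨hA0, hAδ⟩ := hA
    have hterm_lb : ∀ n ∈ Finset.Icc (0:ℤ) (N:ℤ),
        p₀ / 2 ≤ QF k γ ρ n * Real.exp (-(A * (2:ℝ) ^ n)) := by
      intro n hn
      rw [Finset.mem_Icc] at hn
      have h2n : (0:ℝ) < (2:ℝ) ^ n := zpow_pos two_pos n
      have hmono : (2:ℝ) ^ n ≤ (2:ℝ) ^ (N:ℤ) := by
        apply zpow_le_zpow_right₀ one_le_two hn.2
      have hAn : A * (2:ℝ) ^ n ≤ Real.log 2 := by
        calc A * (2:ℝ) ^ n ≤ A * (2:ℝ) ^ (N:ℤ) :=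
            mul_le_mul_of_nonneg_left hmono hA0.le
        _ ≤ δ * (2:ℝ) ^ (N:ℤ) := mul_le_mul_of_nonneg_right hAδ.le h2N.le
        _ = Real.log 2 := by rw [hδ_def]; field_simp
      have hexp : (1:ℝ)/2 ≤ Real.exp (-(A * (2:ℝ) ^ n)) := by
        have h1 : Real.exp (-Real.log 2) ≤ Real.exp (-(A * (2:ℝ) ^ n)) :=
          Real.exp_le_exp.mpr (by linarith)
        rwa [Real.exp_neg, Real.exp_log two_pos, inv_eq_one_div] at h1
      calc p₀ / 2 = p₀ * (1/2) := by ring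
      _ ≤ QF k γ ρ n * Real.exp (-(A * (2:ℝ) ^ n)) :=
          mul_le_mul (hQlb n hn.1) hexp (by norm_num) (hQpos n).le
    have hcard : (Finset.Icc (0:ℤ) (N:ℤ)).card = N + 1 := by
      rw [Int.card_Icc]
      simp
    have hsum_lb : (N + 1 : ℝ) * (p₀ / 2) ≤
        ∑ n ∈ Finset.Icc (0:ℤ) (N:ℤ), QF k γ ρ n * Real.exp (-(A * (2:ℝ) ^ n)) := by
      have h := Finset.card_nsmul_le_sum (Finset.Icc (0:ℤ) (N:ℤ))
        (fun n => QF k γ ρ n * Real.exp (-(A * (2:ℝ) ^ n))) (p₀ / 2) hterm_lb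
      rw [hcard] at h
      rw [nsmul_eq_mul] at h
      push_cast at h ⊢
      linarith
    have htsum_lb : ∑ n ∈ Finset.Icc (0:ℤ) (N:ℤ), QF k γ ρ n * Real.exp (-(A * (2:ℝ) ^ n))
        ≤ ∑' n : ℤ, QF k γ ρ n * Real.exp (-(A * (2:ℝ) ^ n)) :=
      Summable.sum_le_tsum _ (fun n _ => (mul_pos (hQpos n) (Real.exp_pos _)).le) (hsumQ A hA0)
    linarith
  refine ⟨hsum, ?_, ?_, ?_, ?_⟩
  · rw [hFeq]; exact hanti
  · rw [hFeq]; exact htends0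
  · rw [hFeq]; exact htendsInf
  · -- existence and uniqueness
    intro M hM
    simp only [term_eq k γ ρ]
    set F : ℝ → ℝ := fun A : ℝ => ∑' n : ℤ, QF k γ ρ n * Real.exp (-(A * (2:ℝ) ^ n)) with hF_def
    obtain ⟨A₁, hA₁M, hA₁pos⟩ :=
      ((htendsInf.eventually_gt_atTop M).and eventually_mem_nhdsWithin).exists
    rw [Set.mem_Ioi] at hA₁pos
    obtain ⟨A₂, hA₂M, hA₂ge⟩ :=
      ((htends0.eventually (gt_mem_nhds hM)).and (eventually_ge_atTop (A₁ + 1))).exists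
    have hA₁₂ : A₁ ≤ A₂ := by linarith
    have hIccpos : Set.Icc A₁ A₂ ⊆ Set.Ioi (0:ℝ) := fun x hx => lt_of_lt_of_le hA₁pos hx.1
    have hcont : ContinuousOn F (Set.Icc A₁ A₂) := by
      intro a ha
      have h := tendsto_tsum_of_dominated_convergence
        (f := fun (A : ℝ) (n : ℤ) => QF k γ ρ n * Real.exp (-(A * (2:ℝ) ^ n)))
        (g := fun n : ℤ => QF k γ ρ n * Real.exp (-(a * (2:ℝ) ^ n)))
        (bound := fun n : ℤ => QF k γ ρ n * Real.exp (-(A₁ * (2:ℝ) ^ n)))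
        (𝓕 := 𝓝[Set.Icc A₁ A₂] a) (hsumQ A₁ hA₁pos) ?_ ?_
      · exact h
      · intro n
        have hc : Continuous (fun A : ℝ => QF k γ ρ n * Real.exp (-(A * (2:ℝ) ^ n))) := by
          fun_prop
        exact (hc.tendsto a).mono_left nhdsWithin_le_nhds
      · filter_upwards [eventually_mem_nhdsWithin] with A hA n
        rw [Real.norm_eq_abs, abs_of_pos (mul_pos (hQpos n) (Real.exp_pos _))]
        apply mul_le_mul_of_nonneg_left _ (hQpos n).le
        apply Real.exp_le_exp.mpr
        have h2n : (0:ℝ) < (2:ℝ) ^ n := zpow_pos two_pos n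
        have := mul_le_mul_of_nonneg_right hA.1 h2n.le
        linarith
    have hMmem : M ∈ Set.Icc (F A₂) (F A₁) := ⟨hA₂M.le, hA₁M.le⟩
    obtain ⟨A, hAIcc, hFA⟩ := intermediate_value_Icc' hA₁₂ hcont hMmem
    have hApos : 0 < A := hIccpos hAIcc
    refine ⟨A, ⟨hApos, hFA⟩, ?_⟩
    rintro A' ⟨hA'pos, hFA'⟩
    refine hanti.injOn (Set.mem_Ioi.mpr hA'pos) (Set.mem_Ioi.mpr hApos) ?_
    exact hFA'.trans hFA.symm
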